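/- Let G be a bipartite graph that contains an induced cycle of length at least six. Then G is not a proper interval bigraph. Concretely: there is no pair of inclusion-free families of intervals (I_u)_{u∈S}, (I_v)_{v∈T} on the real line, indexed by the two partite sets S and T of G, such that u∈S and v∈T are adjacent in G if and only if I_u and I_v intersect. -/

import Mathlib

/-- The cycle of length `n` on `Fin n`: `i` adjacent to `i ± 1 (mod n)`. -/
def cycleGraph (n : ℕ) : SimpleGraph (Fin n) :=
  SimpleGraph.fromRel (fun i j => (i.val + 1) % n = j.val)

/-- Let `G` be a bipartite graph on `S ⊕ T` (every edge joining `S` to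
`T`) that contains an induced cycle of length at least six.  Then `G` is not a proper
interval bigraph: there is no assignment of intervals `[l v, r v]` on the real line to
the vertices such that `u ∈ S` and `v ∈ T` are adjacent iff their intervals intersect,
and within each partite set the family of intervals is inclusion-free (no interval of
a partite set properly contains another interval from the same partite set). -/
theorem stmt18 {S T : Type*} (G : SimpleGraph (S ⊕ T))
    (hbip : ∀ a b, G.Adj a b → (a.isLeft ∧ b.isRight) ∨ (a.isRight ∧ b.isLeft))
    (hcycle : ∃ (n : ℕ) (_ : 6 ≤ n) (φ : Fin n ↪ S ⊕ T),
      ∀ i j, G.Adj (φ i) (φ j) ↔ (cycleGraph n).Adj i j) :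
    ¬ ∃ l r : S ⊕ T → ℝ,
      (∀ v, l v ≤ r v) ∧
      (∀ (s : S) (t : T), G.Adj (Sum.inl s) (Sum.inr t) ↔
        (Set.Icc (l (Sum.inl s)) (r (Sum.inl s)) ∩
          Set.Icc (l (Sum.inr t)) (r (Sum.inr t))).Nonempty) ∧
      (∀ s s' : S, ¬ Set.Icc (l (Sum.inl s)) (r (Sum.inl s)) ⊂
          Set.Icc (l (Sum.inl s')) (r (Sum.inl s'))) ∧
      (∀ t t' : T, ¬ Set.Icc (l (Sum.inr t)) (r (Sum.inr t)) ⊂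
          Set.Icc (l (Sum.inr t')) (r (Sum.inr t'))) := by
  rintro ⟨l, r, hlr, hadj, -, -⟩
  obtain ⟨n, hn, φ, hφ⟩ := hcycle
  haveI : NeZero n := ⟨by omega⟩
  letI : CommRing (Fin n) := Fin.instCommRing n
  have v1 : ((1 : Fin n)).val = 1 := by
    rw [show ((1 : Fin n)).val = 1 % n from rfl]; exact Nat.mod_eq_of_lt (by omega)
  have v2 : ((2 : Fin n)).val = 2 := by
    rw [show ((2 : Fin n)).val = 2 % n from rfl]; exact Nat.mod_eq_of_lt (by omega)
  have v3 : ((3 : Fin n)).val = 3 := by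
    rw [show ((3 : Fin n)).val = 3 % n from rfl]; exact Nat.mod_eq_of_lt (by omega)
  have v4 : ((4 : Fin n)).val = 4 := by
    rw [show ((4 : Fin n)).val = 4 % n from rfl]; exact Nat.mod_eq_of_lt (by omega)
  have h1 : ∀ i j : Fin n, ((i.val + 1) % n = j.val) ↔ i + 1 = j := by
    intro i j
    rw [Fin.ext_iff, Fin.val_add, v1]
  -- characterize cycle adjacency in terms of Fin arithmetic
  have cyc : ∀ i j : Fin n, (cycleGraph n).Adj i j ↔ i ≠ j ∧ (i + 1 = j ∨ j + 1 = i) := by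
    intro i j
    show (SimpleGraph.fromRel _).Adj i j ↔ _
    rw [SimpleGraph.fromRel_adj, h1, h1]
  -- edges of the cycle
  have adj1 : ∀ i : Fin n, G.Adj (φ i) (φ (i + 1)) := by
    intro i
    rw [hφ, cyc]
    constructor
    · intro h
      have h4 : i + 1 = i + 0 := by rw [add_zero]; exact h.symm
      have := congrArg Fin.val (add_left_cancel h4)
      rw [v1] at this
      simp at this
    · exact Or.inl rfl
  -- non-edges at distance 3
  have nadj3 : ∀ i : Fin n, ¬ G.Adj (φ i) (φ (i + 3)) := by
    intro i h
    rw [hφ, cyc] at h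
    rcases h.2 with h2 | h2
    · have := congrArg Fin.val (add_left_cancel h2)
      rw [v1, v3] at this
      omega
    · have h4 : i + 4 = i + 0 := by
        rw [add_zero, show i + 4 = i + 3 + 1 by ring, h2]
      have := congrArg Fin.val (add_left_cancel h4)
      rw [v4] at this
      simp at this
  -- sides alternate along edges
  have step : ∀ a b, G.Adj a b → a.isLeft = !b.isLeft := by
    intro a b hab
    rcases hbip a b hab with ⟨h1, h2⟩ | ⟨h1, h2⟩ <;>
      rcases a with s | t <;> rcases b with s' | t' <;> simp_all
  have key2 : ∀ a b, a.isLeft = !b.isLeft →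
      (G.Adj a b ↔ (Set.Icc (l a) (r a) ∩ Set.Icc (l b) (r b)).Nonempty) := by
    intro a b hab
    rcases a with s | t <;> rcases b with s' | t' <;> simp at hab
    · exact hadj s t'
    · rw [G.adj_comm, Set.inter_comm]; exact hadj s' t
  have side3 : ∀ i : Fin n, (φ i).isLeft = !(φ (i + 3)).isLeft := by
    intro i
    have h1 := step _ _ (adj1 i)
    have h2 := step _ _ (adj1 (i + 1))
    have h3 := step _ _ (adj1 (i + 2))
    rw [show i + 1 + 1 = i + 2 by ring] at h2
    rw [show i + 2 + 1 = i + 3 by ring] at h3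
    rw [h1, h2, h3]
    simp
  -- notation for intervals
  set L : Fin n → ℝ := fun i => l (φ i) with hL
  set R : Fin n → ℝ := fun i => r (φ i) with hR
  -- choose common points on edges
  have hp : ∀ i : Fin n, ∃ x, x ∈ Set.Icc (L i) (R i) ∧ x ∈ Set.Icc (L (i+1)) (R (i+1)) := by
    intro i
    obtain ⟨x, hx1, hx2⟩ := (key2 _ _ (step _ _ (adj1 i))).mp (adj1 i)
    exact ⟨x, hx1, hx2⟩
  choose p hp1 hp2 using hp
  -- separation at distance 3
  have sep : ∀ i : Fin n, R i < L (i + 3) ∨ R (i + 3) < L i := by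
    intro i
    have hne : ¬ (Set.Icc (L i) (R i) ∩ Set.Icc (L (i+3)) (R (i+3))).Nonempty := by
      intro h
      exact nadj3 i ((key2 _ _ (side3 i)).mpr h)
    by_contra h
    push_neg at h
    exact hne ⟨max (L i) (L (i+3)),
      ⟨le_max_left _ _, max_le (hlr _) h.1⟩,
      ⟨le_max_right _ _, max_le h.2 (hlr _)⟩⟩
  -- the direction of separation is constant along the cycle
  have hstep : ∀ i : Fin n, (R i < L (i + 3) ↔ R (i + 1) < L (i + 1 + 3)) := by
    intro i
    constructor
    · intro hD
      rcases sep (i + 1) with h | h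
      · exact h
      · exfalso
        rw [show i + 1 + 3 = i + 3 + 1 by ring] at h
        have e1 : p i ≤ R i := (hp1 i).2
        have e2 : L (i + 3) ≤ p (i + 3) := (hp1 (i+3)).1
        have e3 : p (i + 3) ≤ R (i + 3 + 1) := (hp2 (i+3)).2
        have e4 : L (i + 1) ≤ p i := (hp2 i).1
        linarith
    · intro hD
      rcases sep i with h | h
      · exact h
      · exfalso
        rw [show i + 1 + 3 = i + 3 + 1 by ring] at hD
        have e1 : p i ≤ R (i + 1) := (hp2 i).2
        have e2 : L (i + 3 + 1) ≤ p (i + 3) := (hp2 (i+3)).1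
        have e3 : p (i + 3) ≤ R (i + 3) := (hp1 (i+3)).2
        have e4 : L i ≤ p i := (hp1 i).1
        linarith
  have hconst : ∀ k : ℕ, (R ((k : Fin n)) < L ((k : Fin n) + 3) ↔ R 0 < L 3) := by
    intro k
    induction k with
    | zero => simp
    | succ m ih =>
      rw [show ((m + 1 : ℕ) : Fin n) = (m : Fin n) + 1 by push_cast; ring]
      rw [← hstep]
      exact ih
  have hall : ∀ i : Fin n, (R i < L (i + 3) ↔ R 0 < L 3) := by
    intro i
    have := hconst i.val
    rwa [Fin.cast_val_eq_self] at this
  -- conclude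
  rcases sep 0 with h0 | h0
  · -- all intervals shift right
    have mono : ∀ i : Fin n, p i < p (i + 2) := by
      intro i
      have hD : R i < L (i + 3) := (hall i).mpr ((hall 0).mp h0)
      have e1 : p i ≤ R i := (hp1 i).2
      have e2 : L (i + 2 + 1) ≤ p (i + 2) := (hp2 (i+2)).1
      rw [show i + 2 + 1 = i + 3 by ring] at e2
      linarith
    have sm : StrictMono (fun k : ℕ => p ((2 * k : ℕ) : Fin n)) := by
      apply strictMono_nat_of_lt_succ
      intro k
      have : ((2 * (k + 1) : ℕ) : Fin n) = ((2 * k : ℕ) : Fin n) + 2 := by push_cast; ring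
      rw [this]
      exact mono _
    have := sm (show 0 < n by omega)
    simp only [Nat.cast_zero, Nat.mul_zero] at this
    rw [show ((2 * n : ℕ) : Fin n) = 0 by push_cast; simp] at this
    exact lt_irrefl _ this
  · -- all intervals shift left
    have h03 : R 3 < L 0 := by
      rw [show (0 : Fin n) + 3 = 3 by ring] at h0; exact h0
    have hnot : ¬ (R 0 < L 3) := by
      intro h
      have a1 : L 0 ≤ R 0 := hlr (φ 0)
      have a2 : L 3 ≤ R 3 := hlr (φ 3)
      linarith
    have mono : ∀ i : Fin n, p (i + 2) < p i := by
      intro i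
      have hD : R (i + 3) < L i := by
        rcases sep i with h | h
        · exact absurd ((hall i).mp h) hnot
        · exact h
      have e1 : p (i + 2) ≤ R (i + 2 + 1) := (hp2 (i+2)).2
      rw [show i + 2 + 1 = i + 3 by ring] at e1
      have e2 : L i ≤ p i := (hp1 i).1
      linarith
    have sm : StrictAnti (fun k : ℕ => p ((2 * k : ℕ) : Fin n)) := by
      apply strictAnti_nat_of_succ_lt
      intro k
      have : ((2 * (k + 1) : ℕ) : Fin n) = ((2 * k : ℕ) : Fin n) + 2 := by push_cast; ring
      rw [this]
      exact mono _
    have := sm (show 0 < n by omega)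
    simp only [Nat.cast_zero, Nat.mul_zero] at this
    rw [show ((2 * n : ℕ) : Fin n) = 0 by push_cast; simp] at this
    exact lt_irrefl _ this
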